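/- Let $\tau : ]-2,\infty[ \to \mathbb{R}$ be defined by $\tau(h) = -\frac{4\pi}{11}\left(2(h+2)^3 - 5(h+2)^2 - 15 + \frac{18}{h+2}\right)$. Then $\tau$ satisfies the boundary conditions $\tau(1) = \tau(-1) = 0$, $\tau'(1) = -8\pi$, $\tau'(-1) = 8\pi$, and moreover $-\frac{1}{2}\tau''(h) - \frac{\tau'(h)}{h+2} = \frac{4\pi}{11}(12h + 9)$ for all $h \in ]-2,\infty[$. -/

import Mathlib

open Real

/-- The profile function `τ` of the extremal Kähler metric on the non-trivial
`S²`-bundle over `T²`. -/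
noncomputable def tauNT : ℝ → ℝ := fun h =>
  -(4 * π / 11) * (2 * (h + 2) ^ 3 - 5 * (h + 2) ^ 2 - 15 + 18 / (h + 2))

noncomputable def tauNT' : ℝ → ℝ := fun h =>
  -(4 * π / 11) * (6 * (h + 2) ^ 2 - 10 * (h + 2) - 18 / (h + 2) ^ 2)

lemma hasDerivAt_tauNT (h : ℝ) (hh : h + 2 ≠ 0) : HasDerivAt tauNT (tauNT' h) h := by
  have h1 : HasDerivAt (fun x : ℝ => x + 2) 1 h := (hasDerivAt_id h).add_const 2
  have hinv : HasDerivAt (fun x : ℝ => (x + 2)⁻¹) (-1 / (h + 2) ^ 2) h := by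
    simpa using h1.fun_inv hh
  have H := ((((h1.fun_pow 3).const_mul 2).fun_sub ((h1.fun_pow 2).const_mul 5)).sub_const 15 |>.fun_add
      (hinv.const_mul 18)).const_mul (-(4 * π / 11))
  refine H.congr_deriv ?_
  simp only [tauNT']
  push_cast
  field_simp
  ring

lemma deriv_tauNT (h : ℝ) (hh : h + 2 ≠ 0) : deriv tauNT h = tauNT' h :=
  (hasDerivAt_tauNT h hh).deriv

lemma hasDerivAt_tauNT' (h : ℝ) (hh : h + 2 ≠ 0) :
    HasDerivAt tauNT' (-(4 * π / 11) * (12 * (h + 2) - 10 + 36 / (h + 2) ^ 3)) h := by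
  have h1 : HasDerivAt (fun x : ℝ => x + 2) 1 h := (hasDerivAt_id h).add_const 2
  have hp : (h + 2) ^ 2 ≠ 0 := pow_ne_zero _ hh
  have hinv : HasDerivAt (fun x : ℝ => ((x + 2) ^ 2)⁻¹)
      (-(2 * (h + 2) ^ 1 * 1) / ((h + 2) ^ 2) ^ 2) h := by
    simpa using (h1.fun_pow 2).fun_inv hp
  have H := (((h1.fun_pow 2).const_mul 6).fun_sub (h1.const_mul 10) |>.fun_sub
      (hinv.const_mul 18)).const_mul (-(4 * π / 11))
  refine H.congr_deriv ?_
  push_cast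
  field_simp
  ring

lemma deriv_deriv_tauNT (h : ℝ) (hh : h + 2 ≠ 0) :
    deriv (deriv tauNT) h = -(4 * π / 11) * (12 * (h + 2) - 10 + 36 / (h + 2) ^ 3) := by
  have hev : deriv tauNT =ᶠ[nhds h] tauNT' := by
    have : ∀ᶠ x in nhds h, x ≠ -2 := eventually_ne_nhds (by intro he; exact hh (by rw [he]; ring))
    filter_upwards [this] with x hx
    exact deriv_tauNT x (by intro he; exact hx (by linarith))
  rw [Filter.EventuallyEq.deriv_eq hev]
  exact (hasDerivAt_tauNT' h hh).deriv

/-- boundary conditions and the scalar curvature identity for `τ`. -/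
theorem stmt_3 :
    tauNT 1 = 0 ∧ tauNT (-1) = 0 ∧
    deriv tauNT 1 = -(8 * π) ∧ deriv tauNT (-1) = 8 * π ∧
    ∀ h : ℝ, -2 < h →
      -(1 / 2) * deriv (deriv tauNT) h - deriv tauNT h / (h + 2)
        = 4 * π / 11 * (12 * h + 9) := by
  refine ⟨by norm_num [tauNT], by norm_num [tauNT], ?_, ?_, ?_⟩
  · rw [deriv_tauNT 1 (by norm_num)]; norm_num [tauNT']; ring
  · rw [deriv_tauNT (-1) (by norm_num)]; norm_num [tauNT']; ring
  · intro h hh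
    have hne : h + 2 ≠ 0 := by linarith
    rw [deriv_tauNT h hne, deriv_deriv_tauNT h hne]
    simp only [tauNT']
    field_simp
    ring
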